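/- Suppose α < β < −α. If P and Q are polynomial eigenfunctions of L(y) = (1−x²)y'' + (αx+β)y' with distinct eigenvalues, then ∫_{−1}^{1} p(x)P(x)Q(x) dx = 0, where p(x) = (1−x)^{−(β+α+2)/2}(1+x)^{(β−α−2)/2}. -/

import Mathlib

open Polynomial MeasureTheory

theorem stmt_13 (α β : ℝ) (h1 : α < β) (h2 : β < -α)
    (P Q : Polynomial ℝ) (lam mu : ℝ) (hlm : lam ≠ mu)
    (hP : (1 - X ^ 2) * (derivative (derivative P)) + (C α * X + C β) * derivative P
      = lam • P)
    (hQ : (1 - X ^ 2) * (derivative (derivative Q)) + (C α * X + C β) * derivative Q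
      = mu • Q) :
    ∫ x in Set.Ioo (-1 : ℝ) 1,
      ((1 - x) ^ (-(β + α + 2) / 2) * (1 + x) ^ ((β - α - 2) / 2)) *
        P.eval x * Q.eval x = 0 := by
  have hlm' : lam - mu ≠ 0 := sub_ne_zero.mpr hlm
  set a : ℝ := -(β + α + 2) / 2 with ha
  set b : ℝ := (β - α - 2) / 2 with hb
  have ha1 : (0:ℝ) < a + 1 := by rw [ha]; linarith
  have hb1 : (0:ℝ) < b + 1 := by rw [hb]; linarith
  have ha' : (-1:ℝ) < a := by linarith
  have hb' : (-1:ℝ) < b := by linarith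
  set U : Polynomial ℝ := derivative P * Q - P * derivative Q with hU
  set F : ℝ → ℝ := fun x => (1 - x) ^ (a+1) * ((1 + x) ^ (b+1) * U.eval x) with hF
  set G : ℝ → ℝ := fun x =>
    ((1 - x) ^ a * (1 + x) ^ b) * P.eval x * Q.eval x with hG
  -- derivative of F
  have hderiv : ∀ x ∈ Set.Ioo (-1:ℝ) 1, HasDerivAt F ((lam - mu) * G x) x := by
    intro x hx
    have hx1 : (0:ℝ) < 1 - x := by linarith [hx.2]
    have hx2 : (0:ℝ) < 1 + x := by linarith [hx.1]
    have heP : (1 - x^2) * (derivative (derivative P)).eval x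
        + (α*x + β) * (derivative P).eval x = lam * P.eval x := by
      have := congrArg (Polynomial.eval x) hP
      simpa [smul_eq_mul] using this
    have heQ : (1 - x^2) * (derivative (derivative Q)).eval x
        + (α*x + β) * (derivative Q).eval x = mu * Q.eval x := by
      have := congrArg (Polynomial.eval x) hQ
      simpa [smul_eq_mul] using this
    have h1 : HasDerivAt (fun x : ℝ => (1 - x) ^ (a+1)) (-(a+1) * (1-x)^a) x := by
      have hd : HasDerivAt (fun x : ℝ => 1 - x) (-1) x := by
        simpa using (hasDerivAt_id x).const_sub 1
      have := hd.rpow_const (p := a+1) (Or.inl hx1.ne')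
      convert this using 1
      rw [add_sub_cancel_right]
      ring
    have h2 : HasDerivAt (fun x : ℝ => (1 + x) ^ (b+1)) ((b+1) * (1+x)^b) x := by
      have hd : HasDerivAt (fun x : ℝ => 1 + x) 1 x := by
        simpa using (hasDerivAt_id x).const_add 1
      have := hd.rpow_const (p := b+1) (Or.inl hx2.ne')
      convert this using 1
      rw [add_sub_cancel_right]
      ring
    have h3 : HasDerivAt (fun x : ℝ => U.eval x) ((derivative U).eval x) x :=
      U.hasDerivAt x
    have hmul := h1.mul (h2.mul h3)
    refine HasDerivAt.congr_deriv hmul ?_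
    symm
    simp only [Pi.mul_apply]
    have hUe : U.eval x = (derivative P).eval x * Q.eval x
        - P.eval x * (derivative Q).eval x := by simp [hU]
    have hUd : (derivative U).eval x = (derivative (derivative P)).eval x * Q.eval x
        - P.eval x * (derivative (derivative Q)).eval x := by
      simp only [hU, derivative_sub, derivative_mul, eval_sub, eval_add, eval_mul]
      ring
    have e1 : (1 - x) ^ (a+1) = (1-x)^a * (1-x) := Real.rpow_add_one hx1.ne' a
    have e2 : (1 + x) ^ (b+1) = (1+x)^b * (1+x) := Real.rpow_add_one hx2.ne' b
    rw [hG, hUe, hUd, e1, e2]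
    have hab : -(a+1) * (1+x) + (b+1) * (1-x) = α*x + β := by rw [ha, hb]; ring
    set A := (1-x)^a
    set B := (1+x)^b
    linear_combination (A*B*((derivative P).eval x * Q.eval x
        - P.eval x * (derivative Q).eval x)) * hab
      + (A*B*(P.eval x)) * heQ - (A*B*(Q.eval x)) * heP
  -- continuity of F on [-1,1]
  have crp : ∀ c : ℝ, 0 ≤ c → Continuous fun t : ℝ => t ^ c := by
    intro c hc
    rw [continuous_iff_continuousAt]
    intro t
    exact Real.continuousAt_rpow_const t c (Or.inr hc)
  have hFc : Continuous F := by
    have c1 : Continuous fun x : ℝ => (1 - x) ^ (a+1) :=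
      (crp _ ha1.le).comp (continuous_const.sub continuous_id)
    have c2 : Continuous fun x : ℝ => (1 + x) ^ (b+1) :=
      (crp _ hb1.le).comp (continuous_const.add continuous_id)
    exact c1.mul (c2.mul (U.continuous_aeval))
  -- integrability of G on [-1,1]
  have int1 : IntervalIntegrable (fun x : ℝ => (1 + x) ^ b) volume (-1) 0 := by
    have h := (intervalIntegral.intervalIntegrable_rpow' (a := 0) (b := 1) hb').comp_add_right 1
    norm_num at h
    simpa [add_comm] using h
  have int2 : IntervalIntegrable (fun x : ℝ => (1 - x) ^ a) volume 0 1 := by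
    have h := (intervalIntegral.intervalIntegrable_rpow' (a := 0) (b := 1) ha').comp_sub_left 1
    norm_num at h
    exact h.symm
  have contP : Continuous fun x : ℝ => P.eval x * Q.eval x :=
    P.continuous_aeval.mul Q.continuous_aeval
  have g_int1 : IntervalIntegrable G volume (-1) 0 := by
    have cont : ContinuousOn (fun x : ℝ => (1 - x) ^ a * (P.eval x * Q.eval x))
        (Set.uIcc (-1:ℝ) 0) := by
      apply ContinuousOn.mul _ contP.continuousOn
      apply ContinuousOn.rpow_const (continuous_const.sub continuous_id).continuousOn
      intro x hx
      left
      rw [Set.uIcc_of_le (by norm_num)] at hx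
      simp only [Pi.sub_apply, id_eq]
      have := hx.2
      intro h
      nlinarith
    have h := int1.mul_continuousOn cont
    have : G = fun x => (1 + x) ^ b * ((1 - x) ^ a * (P.eval x * Q.eval x)) := by
      funext x; rw [hG]; ring
    rw [this]; exact h
  have g_int2 : IntervalIntegrable G volume 0 1 := by
    have cont : ContinuousOn (fun x : ℝ => (1 + x) ^ b * (P.eval x * Q.eval x))
        (Set.uIcc (0:ℝ) 1) := by
      apply ContinuousOn.mul _ contP.continuousOn
      apply ContinuousOn.rpow_const (continuous_const.add continuous_id).continuousOn
      intro x hx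
      left
      rw [Set.uIcc_of_le (by norm_num)] at hx
      simp only [Pi.add_apply, id_eq]
      have := hx.1
      intro h
      nlinarith
    have h := int2.mul_continuousOn cont
    have : G = fun x => (1 - x) ^ a * ((1 + x) ^ b * (P.eval x * Q.eval x)) := by
      funext x; rw [hG]; ring
    rw [this]; exact h
  have g_int : IntervalIntegrable G volume (-1) 1 := g_int1.trans g_int2
  -- FTC
  have hftc : ∫ x in (-1:ℝ)..1, (lam - mu) * G x = F 1 - F (-1) := by
    apply intervalIntegral.integral_eq_sub_of_hasDeriv_right_of_le (by norm_num)
      hFc.continuousOn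
      (fun x hx => (hderiv x hx).hasDerivWithinAt)
    exact (g_int.const_mul (lam - mu))
  have hF1 : F 1 = 0 := by
    rw [hF]
    simp [Real.zero_rpow ha1.ne']
  have hFm1 : F (-1) = 0 := by
    rw [hF]
    simp [Real.zero_rpow hb1.ne']
  rw [hF1, hFm1, sub_zero, intervalIntegral.integral_const_mul] at hftc
  have hint : ∫ x in (-1:ℝ)..1, G x = 0 := by
    rcases mul_eq_zero.mp hftc with h | h
    · exact absurd h hlm'
    · exact h
  rw [intervalIntegral.integral_of_le (by norm_num : (-1:ℝ) ≤ 1),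
    MeasureTheory.integral_Ioc_eq_integral_Ioo] at hint
  exact hint
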